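/- Let k ≥ 2 be an integer and let p > 2 be a prime. For every a ∈ Z(p) (i.e., every nonzero k-th power residue a modulo p), the number of k-th power residues b ∈ ℤ_{p^{2k}} with b ≡ a (mod p) equals p^{2k − 1 − τ(k,p)}, where τ(k,p) is the exponent of p in k; that is, |{b ∈ ℤ_{p^{2k}}^{(k)} : b ≡ a (mod p)}| = p^{2k−1−τ(k,p)}, where ℤ_m^{(k)} = {t^k : t ∈ ℤ_m}. -/

import Mathlib

open Finset Filter

/-- `τ(k,p)`: the exponent of the prime `p` in `k`. -/
def tauP (k p : ℕ) : ℕ := k.factorization p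

/-- `γ(k,p) = τ(k,p)+2` if `p = 2` and `τ(k,p) > 0`, else `τ(k,p)+1`. -/
def gammaP (k p : ℕ) : ℕ :=
  if p = 2 ∧ 0 < tauP k p then tauP k p + 2 else tauP k p + 1

/-- `R_k = ∏_{(p-1) ∣ k} p^{γ(k,p)}` (product over primes `p` with `(p-1) ∣ k`;
any such prime satisfies `p ≤ k+1`). -/
def Rk (k : ℕ) : ℕ :=
  ∏ p ∈ (Finset.range (k + 2)).filter (fun p => p.Prime ∧ (p - 1) ∣ k), p ^ gammaP k p

/-- `W = ∏_{1 < p ≤ w} p^{2k}` (product over primes `p ≤ w`). -/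
noncomputable def Wfun (k : ℕ) (w : ℝ) : ℕ :=
  ∏ p ∈ (Finset.range (⌊w⌋₊ + 1)).filter Nat.Prime, p ^ (2 * k)

/-- `Z(m) = {a ∈ ℤ_m : a is a k-th power and (a,m) = 1}`. -/
def Zset (k m : ℕ) : Set (ZMod m) := {a | (∃ t : ZMod m, t ^ k = a) ∧ IsUnit a}

/-- `(q,s)` is a Waring pair: for any `B ⊆ Z(q)` with `|B| > |Z(q)|/2`, the `s`-fold
sumset of `B` equals `{a ∈ ℤ_q : a ≡ s (mod gcd(R_k, q))}`. -/
def WaringPair (k q s : ℕ) : Prop :=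
  ∀ B : Finset (ZMod q), ↑B ⊆ Zset k q → (Zset k q).ncard < 2 * B.card →
    {a : ZMod q | ∃ b : Fin s → ZMod q, (∀ i, b i ∈ B) ∧ a = ∑ i, b i} =
      {a : ZMod q | ZMod.castHom (Nat.gcd_dvd_right (Rk k) q)
          (ZMod (Nat.gcd (Rk k) q)) a = (s : ZMod (Nat.gcd (Rk k) q))}

open Classical in
/-- The lower density of `A` relative to the primes:
`liminf_{N → ∞} |A ∩ [N]| / |ℙ ∩ [N]|`. -/
noncomputable def lowerDensity (A : Set ℕ) : ℝ :=
  Filter.liminf (fun N : ℕ =>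
    (((Finset.Icc 1 N).filter (· ∈ A)).card : ℝ) /
      (((Finset.Icc 1 N).filter Nat.Prime).card : ℝ)) Filter.atTop

open Classical in
/-- `π_P(N) = #{n ≤ N : n ∈ P}`. -/
noncomputable def primeCount (P : Set ℕ) (N : ℕ) : ℕ :=
  ((Finset.Icc 1 N).filter (· ∈ P)).card

/-- `w = log log log n₀`. -/
noncomputable def www (n₀ : ℕ) : ℝ := Real.log (Real.log (Real.log n₀))

/-- The `W` of the W-trick: `W = ∏_{1 < p ≤ log log log n₀} p^{2k}`. -/
noncomputable def WW (k n₀ : ℕ) : ℕ := Wfun k (www n₀)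

/-- `N = ⌊2n₀ / (sW)⌋`. -/
noncomputable def NN (k s n₀ : ℕ) : ℕ := 2 * n₀ / (s * WW k n₀)

/-- `σ(b) = #{z ∈ [W] : z^k ≡ b (mod W)}`. -/
def sigmaB (k W b : ℕ) : ℕ :=
  ((Finset.Icc 1 W).filter (fun z => z ^ k % W = b % W)).card

open Classical in
/-- The set of `b ∈ [W]` with `b mod W ∈ Z(W)`, as a finset of naturals. -/
noncomputable def ZFinset (k W : ℕ) : Finset ℕ :=
  (Finset.Icc 1 W).filter (fun b => (b : ZMod W) ∈ Zset k W)

open Classical in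
/-- `f_b(n) = (φ(W)/(W σ(b))) k p^{k-1} log p` if `Wn + b = p^k` with `p ∈ A`, else `0`. -/
noncomputable def fWeight (A : Set ℕ) (k W b n : ℕ) : ℝ :=
  ∑ p ∈ (Finset.range (W * n + b + 1)).filter (fun p => p ∈ A ∧ W * n + b = p ^ k),
    (W.totient : ℝ) / ((W : ℝ) * (sigmaB k W b : ℝ)) *
      ((k : ℝ) * (p : ℝ) ^ (k - 1) * Real.log p)

/-- `ν_b(n) = (φ(W)/(W σ(b))) k p^{k-1} log p` if `Wn + b = p^k` with `p` prime, else `0`. -/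
noncomputable def nuB (k W b : ℕ) : ℕ → ℝ := fWeight {p | p.Prime} k W b

/-- `g(b, N) = 𝔼_{n ∈ [N]} f_b(n)`. -/
noncomputable def gAvg (A : Set ℕ) (k W b N : ℕ) : ℝ :=
  (∑ n ∈ Finset.Icc 1 N, fWeight A k W b n) / (N : ℝ)

/-- Fourier transform `f̂(α) = Σ_{n ∈ [N]} f(n) e(nα)` of a function supported on `[N]`. -/
noncomputable def fourierT (f : ℕ → ℝ) (N : ℕ) (α : ℝ) : ℂ :=
  ∑ n ∈ Finset.Icc 1 N,
    (f n : ℂ) * Complex.exp (2 * (Real.pi : ℂ) * Complex.I * (n : ℂ) * (α : ℂ))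

/-- `L = log (WN + W)^{1/k} = (1/k) log(WN + W)`. -/
noncomputable def LL (k s n₀ : ℕ) : ℝ :=
  Real.log ((WW k n₀ : ℝ) * (NN k s n₀ : ℝ) + (WW k n₀ : ℝ)) / (k : ℝ)

/-- `α` lies in the minor arcs `𝔪 = 𝕋 \ 𝔐`, where `𝔐` is the union of the arcs
`{α : |α - a/q| ≤ 1/Q}` over `1 ≤ q ≤ P` and integers `a` with `gcd(a,q) = 1`. -/
def minorArc (P Q α : ℝ) : Prop :=
  ¬ ∃ q : ℕ, ∃ a : ℤ, 1 ≤ q ∧ (q : ℝ) ≤ P ∧ Int.gcd a q = 1 ∧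
      |α - (a : ℝ) / (q : ℝ)| ≤ 1 / Q

/-- `S_q^*(a,z) = Σ_{0 ≤ r < q, (z+Wr, Wq)=1} e_q(a((z+Wr)^k - b)/W)`. -/
noncomputable def SqStar (k W q : ℕ) (a b z : ℤ) : ℂ :=
  ∑ r ∈ Finset.range q,
    if Int.gcd (z + (W : ℤ) * r) ((W : ℤ) * q) = 1 then
      Complex.exp (2 * (Real.pi : ℂ) * Complex.I *
        ((a : ℂ) * ((((z + (W : ℤ) * r) ^ k - b : ℤ) : ℂ)) / ((W : ℂ) * (q : ℂ))))
    else 0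

/-- `I(β) = ∫₀^N e(βt) dt`. -/
noncomputable def Ibeta (N : ℕ) (β : ℝ) : ℂ :=
  ∫ t in (0:ℝ)..(N : ℝ), Complex.exp (2 * (Real.pi : ℂ) * Complex.I * ((β : ℂ) * (t : ℂ)))

private lemma shift' {G : Type*} [Group G] [Fintype G] [DecidableEq G]
    (P Q : G → Prop) [DecidablePred P] [DecidablePred Q] (x₀ : G)
    (hPQ : ∀ x, P x ↔ Q (x₀⁻¹ * x)) :
    (Finset.univ.filter P).card = (Finset.univ.filter Q).card := by
  refine Finset.card_bij' (fun x _ => x₀⁻¹ * x) (fun x _ => x₀ * x) ?_ ?_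
      (by intros; group) (by intros; group)
  · intro x hx
    simp only [Finset.mem_filter, Finset.mem_univ, true_and] at hx ⊢
    exact (hPQ x).mp hx
  · intro x hx
    simp only [Finset.mem_filter, Finset.mem_univ, true_and] at hx ⊢
    refine (hPQ (x₀ * x)).mpr ?_
    rwa [inv_mul_cancel_left]

private lemma card_ker_mul {G H : Type*} [Group G] [Fintype G] [Group H] [Fintype H]
    [DecidableEq G] [DecidableEq H] (f : G →* H) (hf : Function.Surjective f) :
    Fintype.card G = Fintype.card H * (Finset.univ.filter fun x => f x = 1).card := by
  have h := Finset.card_eq_sum_card_fiberwise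
    (f := f) (s := (Finset.univ : Finset G)) (t := (Finset.univ : Finset H))
    (fun x _ => Finset.mem_univ _)
  rw [Finset.card_univ] at h
  rw [h]
  rw [Finset.sum_congr rfl (fun y _ => ?_), Finset.sum_const, Finset.card_univ, smul_eq_mul]
  obtain ⟨x₀, hx₀⟩ := hf y
  refine shift' _ _ x₀ (fun x => ?_)
  simp only [map_mul, map_inv, hx₀]
  rw [inv_mul_eq_one, eq_comm]

private lemma castHom_eq_one_iff {n r : ℕ} [NeZero n] (h : r ∣ n) (x : ZMod n) :
    ZMod.castHom h (ZMod r) x = 1 ↔ (r : ℤ) ∣ (x.val : ℤ) - 1 := by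
  rw [ZMod.castHom_apply, ← ZMod.natCast_val, show (1 : ZMod r) = ((1 : ℕ) : ZMod r) by norm_num,
    ZMod.natCast_eq_natCast_iff, Nat.modEq_iff_dvd]
  push_cast
  exact dvd_sub_comm

private lemma pow_eq_one_iff_int {n : ℕ} [NeZero n] (x : ZMod n) (j : ℕ) :
    x ^ j = 1 ↔ (n : ℤ) ∣ (x.val : ℤ) ^ j - 1 := by
  conv_lhs => rw [show x = ((x.val : ℕ) : ZMod n) by rw [ZMod.natCast_val, ZMod.cast_id]]
  rw [← Nat.cast_pow, show (1 : ZMod n) = ((1 : ℕ) : ZMod n) by norm_num,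
    ZMod.natCast_eq_natCast_iff, Nat.modEq_iff_dvd]
  push_cast
  exact dvd_sub_comm

private lemma int_lte {p : ℕ} (hp : p.Prime) (hp2 : 2 < p) {X : ℤ} (hX : (p : ℤ) ∣ X - 1)
    {m τ : ℕ} (hτm : τ ≤ m) :
    (p : ℤ) ^ m ∣ X ^ (p ^ τ) - 1 ↔ (p : ℤ) ^ (m - τ) ∣ X - 1 := by
  by_cases hX1 : X = 1
  · subst hX1; simp
  · have hpx : ¬ (p : ℤ) ∣ X := by
      intro hd
      have h1 : (p : ℤ) ∣ 1 := by simpa using dvd_sub hd hX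
      have h2 := Int.le_of_dvd one_pos h1
      have h3 : p ≤ 1 := by exact_mod_cast h2
      omega
    have hodd : Odd p := hp.odd_of_ne_two (by omega)
    have E := Int.emultiplicity_pow_sub_pow hp hodd (x := X) (y := 1) (by simpa using hX)
      hpx (p ^ τ)
    rw [one_pow, Nat.Prime.emultiplicity_pow_self hp] at E
    rw [pow_dvd_iff_le_emultiplicity, pow_dvd_iff_le_emultiplicity, E]
    generalize emultiplicity ((p : ℤ)) (X - 1) = e
    induction e using ENat.recTopCoe with
    | top => simp
    | coe n =>
      rw [← Nat.cast_add, Nat.cast_le, Nat.cast_le]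
      omega

/-- Lemma 4.3: for a prime `p > 2` and `a ∈ Z(p)`, the number of k-th
powers `b ∈ ℤ_{p^{2k}}` with `b ≡ a (mod p)` is `p^{2k-1-τ(k,p)}`. -/
theorem statement3 (k : ℕ) (hk : 2 ≤ k) (p : ℕ) (hp : p.Prime) (hp2 : 2 < p)
    (a : ZMod p) (ha : a ∈ Zset k p) :
    {b : ZMod (p ^ (2 * k)) | (∃ t : ZMod (p ^ (2 * k)), t ^ k = b) ∧
        ZMod.castHom (dvd_pow_self p (show 2 * k ≠ 0 by omega)) (ZMod p) b = a}.ncard =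
      p ^ (2 * k - 1 - tauP k p) := by
  classical
  have hpf : Fact p.Prime := ⟨hp⟩
  obtain ⟨⟨t0, ht0⟩, haU⟩ := ha
  set m := 2 * k with hm
  set τ := tauP k p with hτdef
  have hτk : τ < k := by
    have h1 : p ^ τ ∣ k := Nat.ordProj_dvd k p
    have h2 : p ^ τ ≤ k := Nat.le_of_dvd (by omega) h1
    have h3 : τ < 2 ^ τ := Nat.lt_two_pow_self
    have h4 : 2 ^ τ ≤ p ^ τ := Nat.pow_le_pow_left (by omega) τ
    omega
  have hm0 : m ≠ 0 := by omega
  have hNZ : NeZero (p ^ m) := ⟨pow_ne_zero m (by omega)⟩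
  have hNZ2 : NeZero (p ^ (m - τ)) := ⟨pow_ne_zero _ (by omega)⟩
  have hdvd1 : p ∣ p ^ m := dvd_pow_self p hm0
  have hdvd2 : p ^ (m - τ) ∣ p ^ m := pow_dvd_pow p (by omega)
  set π : (ZMod (p ^ m))ˣ →* (ZMod p)ˣ := ZMod.unitsMap hdvd1 with hπdef
  set π₂ : (ZMod (p ^ m))ˣ →* (ZMod (p ^ (m - τ)))ˣ := ZMod.unitsMap hdvd2 with hπ₂def
  have hπval : ∀ x : (ZMod (p ^ m))ˣ, (π x : ZMod p) = ZMod.castHom hdvd1 (ZMod p) (x : ZMod (p ^ m)) := by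
    intro x; rfl
  have hπ₂val : ∀ x : (ZMod (p ^ m))ˣ,
      (π₂ x : ZMod (p ^ (m - τ))) = ZMod.castHom hdvd2 (ZMod (p ^ (m - τ))) (x : ZMod (p ^ m)) := by
    intro x; rfl
  have hsurj : Function.Surjective π := ZMod.unitsMap_surjective hdvd1
  have hsurj2 : Function.Surjective π₂ := ZMod.unitsMap_surjective hdvd2
  have cardG : Fintype.card (ZMod (p ^ m))ˣ = p ^ (m - 1) * (p - 1) := by
    rw [ZMod.card_units_eq_totient, Nat.totient_prime_pow hp (by omega)]
  have cardFp : Fintype.card (ZMod p)ˣ = p - 1 := ZMod.card_units p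
  have cardG2 : Fintype.card (ZMod (p ^ (m - τ)))ˣ = p ^ (m - τ - 1) * (p - 1) := by
    rw [ZMod.card_units_eq_totient, Nat.totient_prime_pow hp (by omega)]
  -- cardinality of the kernel of π
  have kerπcard : (Finset.univ.filter fun x : (ZMod (p ^ m))ˣ => π x = 1).card = p ^ (m - 1) := by
    have h := card_ker_mul π hsurj
    rw [cardG, cardFp] at h
    have hpos : 0 < p - 1 := by omega
    exact (Nat.eq_of_mul_eq_mul_left hpos (by linarith [h] )).symm
  have kerπ₂card : (Finset.univ.filter fun x : (ZMod (p ^ m))ˣ => π₂ x = 1).card = p ^ τ := by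
    have h := card_ker_mul π₂ hsurj2
    rw [cardG, cardG2] at h
    have hsplit : p ^ (m - 1) = p ^ (m - τ - 1) * p ^ τ := by
      rw [← pow_add]
      have h9 : m - τ - 1 + τ = m - 1 := by omega
      rw [h9]
    have hpos : 0 < p ^ (m - τ - 1) * (p - 1) := by
      have : 0 < p ^ (m - τ - 1) := Nat.pow_pos (by omega)
      have : 0 < p - 1 := by omega
      positivity
    apply Nat.eq_of_mul_eq_mul_left hpos
    rw [← h, hsplit]; ring
  -- elements of the kernel of π have p-power order
  have hpow1 : ∀ x : (ZMod (p ^ m))ˣ, π x = 1 → x ^ (p ^ (m - 1)) = 1 := by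
    intro x hx
    have hxk : x ∈ MonoidHom.ker π := hx
    have hcard : Fintype.card (MonoidHom.ker π) = p ^ (m - 1) := by
      rw [← kerπcard]
      simp [Fintype.card_subtype, MonoidHom.mem_ker]
    have h := pow_card_eq_one (G := MonoidHom.ker π) (x := ⟨x, hxk⟩)
    rw [hcard] at h
    have := congrArg (Subgroup.subtype _) h
    simpa using this
  -- lifting k-th roots of unity along π
  have hlifty : ∀ y : (ZMod p)ˣ, y ^ k = 1 →
      ∃ x : (ZMod (p ^ m))ˣ, x ^ k = 1 ∧ π x = y := by
    intro y hy
    obtain ⟨t, ht⟩ := hsurj y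
    obtain ⟨c, hc⟩ : ∃ c, p ^ (m - 1) = 1 + (p - 1) * c := by
      have hdvd : p - 1 ∣ p ^ (m - 1) - 1 ^ (m - 1) := Nat.sub_dvd_pow_sub_pow p 1 (m - 1)
      rw [one_pow] at hdvd
      obtain ⟨c, hc⟩ := hdvd
      have h1 : 1 ≤ p ^ (m - 1) := Nat.one_le_pow _ _ (by omega)
      exact ⟨c, by omega⟩
    refine ⟨t ^ (p ^ (m - 1)), ?_, ?_⟩
    · have hw : π (t ^ k) = 1 := by rw [map_pow, ht, hy]
      calc (t ^ p ^ (m - 1)) ^ k = (t ^ k) ^ p ^ (m - 1) := by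
            rw [← pow_mul, ← pow_mul, mul_comm]
        _ = 1 := hpow1 _ hw
    · rw [map_pow, ht, hc, pow_add, pow_mul, pow_one,
        ZMod.units_pow_card_sub_one_eq_one p y, one_pow, mul_one]
  -- the subgroup {x : x^k = 1, π x = 1} is exactly ker π₂
  have hker2 : ∀ x : (ZMod (p ^ m))ˣ, (x ^ k = 1 ∧ π x = 1) ↔ π₂ x = 1 := by
    intro x
    have hUx : ∀ j : ℕ, (x ^ j = 1) ↔ ((p ^ m : ℕ) : ℤ) ∣ ((x : ZMod (p ^ m)).val : ℤ) ^ j - 1 := by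
      intro j
      rw [← pow_eq_one_iff_int]
      constructor
      · intro h
        have := congrArg Units.val h
        simpa using this
      · intro h; ext; simpa using h
    have hπ1 : (π x = 1) ↔ (p : ℤ) ∣ ((x : ZMod (p ^ m)).val : ℤ) - 1 := by
      rw [Units.ext_iff, hπval x, Units.val_one]
      exact_mod_cast castHom_eq_one_iff hdvd1 (x : ZMod (p ^ m))
    have hπ₂1 : (π₂ x = 1) ↔ ((p ^ (m - τ) : ℕ) : ℤ) ∣ ((x : ZMod (p ^ m)).val : ℤ) - 1 := by
      rw [Units.ext_iff, hπ₂val x, Units.val_one]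
      exact castHom_eq_one_iff hdvd2 (x : ZMod (p ^ m))
    constructor
    · rintro ⟨hxk, hxπ⟩
      have h1 : x ^ (p ^ (m - 1)) = 1 := hpow1 x hxπ
      have h2 : orderOf x ∣ p ^ (m - 1) := orderOf_dvd_of_pow_eq_one h1
      have h3 : orderOf x ∣ k := orderOf_dvd_of_pow_eq_one hxk
      obtain ⟨j, hjle, hj⟩ := (Nat.dvd_prime_pow hp).mp h2
      have hjτ : j ≤ τ := by
        rw [hτdef]
        exact (Nat.Prime.pow_dvd_iff_le_factorization hp (by omega)).mp (hj ▸ h3)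
      have h4 : x ^ (p ^ τ) = 1 := by
        apply orderOf_dvd_iff_pow_eq_one.mp
        rw [hj]; exact pow_dvd_pow p hjτ
      rw [hπ₂1]
      have h5 := (hUx (p ^ τ)).mp h4
      push_cast at h5 ⊢
      exact (int_lte hp hp2 (hπ1.mp hxπ) (by omega)).mp h5
    · intro h2x
      have hdX : ((p : ℤ)) ^ (m - τ) ∣ ((x : ZMod (p ^ m)).val : ℤ) - 1 := by
        have := hπ₂1.mp h2x; push_cast at this; exact this
      have hX : (p : ℤ) ∣ ((x : ZMod (p ^ m)).val : ℤ) - 1 :=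
        dvd_trans (dvd_pow_self (p : ℤ) (show m - τ ≠ 0 by omega)) hdX
      have h4 : x ^ (p ^ τ) = 1 := by
        rw [hUx (p ^ τ)]
        push_cast
        exact (int_lte hp hp2 hX (by omega)).mpr hdX
      obtain ⟨c, hc⟩ : p ^ τ ∣ k := Nat.ordProj_dvd k p
      have hxk : x ^ k = 1 := by
        have hx1 : x ^ (p ^ τ * c) = 1 := by
          have hcc := congrArg (· ^ c) h4
          simpa [← pow_mul] using hcc
        rwa [← hc] at hx1
      refine ⟨hxk, ?_⟩
      have hpp : p ∣ p ^ (m - τ) := dvd_pow_self p (show m - τ ≠ 0 by omega)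
      have hcomp := ZMod.unitsMap_comp hpp hdvd2
      have hcx : π x = (ZMod.unitsMap hpp) (π₂ x) := (DFunLike.congr_fun hcomp x).symm
      rw [hcx, h2x, map_one]
  have kerφπcard :
      (Finset.univ.filter fun x : (ZMod (p ^ m))ˣ => x ^ k = 1 ∧ π x = 1).card = p ^ τ := by
    rw [← kerπ₂card]
    congr 1
    apply Finset.filter_congr
    intro x _
    simp [hker2 x]
  -- the set of k-th roots of unity downstairs
  set Y : Finset (ZMod p)ˣ := Finset.univ.filter (fun y => y ^ k = 1) with hY
  have hYpos : 0 < Y.card := Finset.card_pos.mpr ⟨1, by simp [hY]⟩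
  -- unit versions of a and t0
  have ht0U : IsUnit t0 := by
    have h1 : IsUnit (t0 ^ k) := ht0 ▸ haU
    exact (isUnit_pow_iff (show k ≠ 0 by omega)).mp h1
  have htua : ht0U.unit ^ k = haU.unit := by
    ext
    push_cast [IsUnit.unit_spec]
    rw [ht0]
  -- cardinality of the k-torsion of G
  have kerφcard : (Finset.univ.filter fun x : (ZMod (p ^ m))ˣ => x ^ k = 1).card
      = Y.card * p ^ τ := by
    have hsummand : ∀ y ∈ Y,
        ((Finset.univ.filter fun x : (ZMod (p ^ m))ˣ => x ^ k = 1).filter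
          fun x => π x = y).card = p ^ τ := by
      intro y hy
      rw [Finset.filter_filter]
      obtain ⟨x₀, hx₀k, hx₀π⟩ := hlifty y (by simpa [hY] using hy)
      rw [← kerφπcard]
      refine shift' _ _ x₀ (fun x => ?_)
      simp only [map_mul, map_inv, hx₀π, mul_pow, inv_pow, hx₀k, inv_one, one_mul,
        inv_mul_eq_one]
      tauto
    rw [Finset.card_eq_sum_card_fiberwise (f := π) (t := Y)
      (fun x hx => by
        simp only [Finset.mem_coe, Finset.mem_filter, Finset.mem_univ, true_and, hY] at hx ⊢
        rw [← map_pow, hx, map_one]),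
      Finset.sum_congr rfl hsummand, Finset.sum_const, smul_eq_mul]
  -- the fiber of x ↦ π(x)^k over the unit of a
  have hψfc : (Finset.univ.filter fun x : (ZMod (p ^ m))ˣ => (π x) ^ k = haU.unit).card
      = Y.card * p ^ (m - 1) := by
    have hsummand : ∀ y ∈ (Finset.univ.filter fun y : (ZMod p)ˣ => y ^ k = haU.unit),
        ((Finset.univ.filter fun x : (ZMod (p ^ m))ˣ => (π x) ^ k = haU.unit).filter
          fun x => π x = y).card = p ^ (m - 1) := by
      intro y hy
      simp only [Finset.mem_filter, Finset.mem_univ, true_and] at hy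
      rw [Finset.filter_filter]
      have heq : (Finset.univ.filter
            fun x : (ZMod (p ^ m))ˣ => (π x) ^ k = haU.unit ∧ π x = y)
          = Finset.univ.filter fun x => π x = y := by
        apply Finset.filter_congr
        intro x _
        exact ⟨fun h => h.2, fun h => ⟨by rw [h, hy], h⟩⟩
      rw [heq, ← kerπcard]
      obtain ⟨x₀, hx₀⟩ := hsurj y
      refine shift' _ _ x₀ (fun x => ?_)
      simp only [map_mul, map_inv, hx₀]
      rw [inv_mul_eq_one, eq_comm]
    have hcY : (Finset.univ.filter fun y : (ZMod p)ˣ => y ^ k = haU.unit).card = Y.card := by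
      rw [hY]
      refine shift' _ _ ht0U.unit (fun y => ?_)
      rw [mul_pow, inv_pow, htua, inv_mul_eq_one, eq_comm]
    rw [Finset.card_eq_sum_card_fiberwise (f := π)
      (t := Finset.univ.filter fun y : (ZMod p)ˣ => y ^ k = haU.unit)
      (fun x hx => by
        simp only [Finset.mem_coe, Finset.mem_filter, Finset.mem_univ, true_and] at hx ⊢
        exact hx),
      Finset.sum_congr rfl hsummand, Finset.sum_const, smul_eq_mul, hcY]
  -- main count
  have hS : (Finset.univ.filter
        fun u : (ZMod (p ^ m))ˣ => (∃ t, t ^ k = u) ∧ π u = haU.unit).card * (Y.card * p ^ τ)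
      = Y.card * p ^ (m - 1) := by
    have hsummand : ∀ u ∈ (Finset.univ.filter
          fun u : (ZMod (p ^ m))ˣ => (∃ t, t ^ k = u) ∧ π u = haU.unit),
        ((Finset.univ.filter fun x : (ZMod (p ^ m))ˣ => (π x) ^ k = haU.unit).filter
          fun x => x ^ k = u).card
          = (Finset.univ.filter fun x : (ZMod (p ^ m))ˣ => x ^ k = 1).card := by
      intro u hu
      simp only [Finset.mem_filter, Finset.mem_univ, true_and] at hu
      obtain ⟨⟨t, ht⟩, huπ⟩ := hu
      rw [Finset.filter_filter]
      have heq : (Finset.univ.filter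
            fun x : (ZMod (p ^ m))ˣ => (π x) ^ k = haU.unit ∧ x ^ k = u)
          = Finset.univ.filter fun x => x ^ k = u := by
        apply Finset.filter_congr
        intro x _
        refine ⟨fun h => h.2, fun h => ⟨?_, h⟩⟩
        rw [← map_pow, h, huπ]
      rw [heq]
      refine shift' _ _ t (fun x => ?_)
      rw [mul_pow, inv_pow, ht, inv_mul_eq_one, eq_comm]
    have hfib : (Finset.univ.filter
          fun x : (ZMod (p ^ m))ˣ => (π x) ^ k = haU.unit).card
        = (Finset.univ.filter
            fun u : (ZMod (p ^ m))ˣ => (∃ t, t ^ k = u) ∧ π u = haU.unit).card *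
          (Finset.univ.filter fun x : (ZMod (p ^ m))ˣ => x ^ k = 1).card := by
      rw [Finset.card_eq_sum_card_fiberwise (f := fun t => t ^ k)
        (t := Finset.univ.filter
          fun u : (ZMod (p ^ m))ˣ => (∃ t, t ^ k = u) ∧ π u = haU.unit)
        (fun x hx => by
          simp only [Finset.mem_coe, Finset.mem_filter, Finset.mem_univ, true_and] at hx ⊢
          exact ⟨⟨x, rfl⟩, by rw [map_pow]; exact hx⟩),
        Finset.sum_congr rfl hsummand, Finset.sum_const, smul_eq_mul]
    rw [← kerφcard, ← hψfc, hfib]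
  have hfinal : (Finset.univ.filter
        fun u : (ZMod (p ^ m))ˣ => (∃ t, t ^ k = u) ∧ π u = haU.unit).card
      = p ^ (m - 1 - τ) := by
    have hpos : 0 < Y.card * p ^ τ :=
      Nat.mul_pos hYpos (Nat.pow_pos (by omega))
    apply Nat.eq_of_mul_eq_mul_right hpos
    rw [hS]
    have hsplit : p ^ (m - 1) = p ^ (m - 1 - τ) * p ^ τ := by
      rw [← pow_add, Nat.sub_add_cancel (show τ ≤ m - 1 by omega)]
    rw [hsplit]
    exact mul_left_comm _ _ _
  -- convert the set in the statement to the units count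
  have hset : ∀ hd : p ∣ p ^ m,
      {b : ZMod (p ^ m) | (∃ t : ZMod (p ^ m), t ^ k = b) ∧ ZMod.castHom hd (ZMod p) b = a}
        = Units.val '' {u : (ZMod (p ^ m))ˣ | (∃ t, t ^ k = u) ∧ π u = haU.unit} := by
    intro hd
    ext b
    constructor
    · rintro ⟨⟨t, ht⟩, hb⟩
      have h1 : ¬ (p ∣ b.val) := by
        intro hdvd
        have h0 : ZMod.castHom hd (ZMod p) b = 0 := by
          rw [ZMod.castHom_apply, ← ZMod.natCast_val]
          exact (ZMod.natCast_eq_zero_iff _ _).mpr hdvd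
        rw [hb] at h0
        rw [h0] at haU
        exact not_isUnit_zero haU
      have h2 : Nat.Coprime b.val (p ^ m) :=
        Nat.Coprime.pow_right _ ((Nat.Prime.coprime_iff_not_dvd hp).mpr h1).symm
      have hbU : IsUnit b := by
        rw [show b = ((b.val : ℕ) : ZMod (p ^ m)) by rw [ZMod.natCast_val, ZMod.cast_id]]
        exact (ZMod.isUnit_iff_coprime _ _).mpr h2
      have htU : IsUnit t := by
        have h3 : IsUnit (t ^ k) := ht ▸ hbU
        exact (isUnit_pow_iff (show k ≠ 0 by omega)).mp h3
      refine ⟨hbU.unit, ⟨⟨htU.unit, ?_⟩, ?_⟩, hbU.unit_spec⟩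
      · ext
        push_cast [IsUnit.unit_spec]
        rw [ht]
      · ext
        rw [hπval, IsUnit.unit_spec, IsUnit.unit_spec]
        exact hb
    · rintro ⟨u, ⟨⟨t, ht⟩, hu⟩, rfl⟩
      constructor
      · exact ⟨(t : ZMod (p ^ m)), by exact_mod_cast congrArg Units.val ht⟩
      · have := congrArg Units.val hu
        rw [hπval, IsUnit.unit_spec] at this
        exact this
  rw [hset _, Set.ncard_image_of_injective _ Units.val_injective]
  rw [← Nat.card_coe_set_eq, Set.coe_setOf, Nat.card_eq_fintype_card,
    Fintype.card_subtype]
  exact hfinal
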